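/- Let X be a σ-compact topological space and let μ and ν be Borel measures on X. Suppose there is a collection 𝒰 of open subsets of X such that: (U0) 𝒰 is a base for the topology of X; (U1) 𝒰 is closed under containment, i.e., if V ⊆ U are open and U ∈ 𝒰, then V ∈ 𝒰; (U2) μ(U) < ∞ and ν(U) < ∞ for all U ∈ 𝒰; and (U3) μ(U) = ν(U) for all U ∈ 𝒰. Then μ = ν, i.e., μ(B) = ν(B) for every Borel set B ⊆ X. -/
import Mathlib


open MeasureTheory

theorem borel_measures_eq_of_agree_on_base
    {X : Type*} [TopologicalSpace X] [MeasurableSpace X] [BorelSpace X]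
    [SigmaCompactSpace X] (μ ν : Measure X) (𝒰 : Set (Set X))
    (hopen : ∀ U ∈ 𝒰, IsOpen U)
    (hbase : ∀ O : Set X, IsOpen O → ∃ S ⊆ 𝒰, O = ⋃₀ S)
    (hdown : ∀ U V : Set X, U ∈ 𝒰 → IsOpen V → V ⊆ U → V ∈ 𝒰)
    (hfin : ∀ U ∈ 𝒰, μ U < ⊤ ∧ ν U < ⊤)
    (hagree : ∀ U ∈ 𝒰, μ U = ν U) :
    μ = ν := by
  classical
  -- μ and ν agree (finitely) on finite unions of elements of 𝒰
  have hVn : ∀ n : ℕ, ∀ t : Finset (Set X), t.card ≤ n → ↑t ⊆ 𝒰 →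
      μ (⋃₀ ↑t) = ν (⋃₀ ↑t) ∧ μ (⋃₀ ↑t) < ⊤ ∧ ν (⋃₀ ↑t) < ⊤ := by
    intro n
    induction n with
    | zero =>
      intro t hcard _
      have : t = ∅ := Finset.card_eq_zero.mp (Nat.le_antisymm hcard (Nat.zero_le _))
      subst this
      simp
    | succ n ih =>
      intro t hcard hsub
      rcases t.eq_empty_or_nonempty with rfl | ⟨a, ha⟩
      · simp
      have htins : t = insert a (t.erase a) := (Finset.insert_erase ha).symm
      set s : Finset (Set X) := t.erase a with hsdef
      have hscard : s.card ≤ n := by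
        have h1 : s.card = t.card - 1 := by rw [hsdef, Finset.card_erase_of_mem ha]
        have h2 : 0 < t.card := Finset.card_pos.mpr ⟨a, ha⟩
        omega
      have ha𝒰 : a ∈ 𝒰 := hsub ha
      have hs𝒰 : ↑s ⊆ 𝒰 := fun x hx => hsub (Finset.mem_of_mem_erase hx)
      obtain ⟨ihe, ihμ, ihν⟩ := ih s hscard hs𝒰
      have hAopen : IsOpen (⋃₀ (↑s : Set (Set X))) :=
        isOpen_sUnion fun x hx => hopen x (hs𝒰 hx)
      -- the intersection a ∩ ⋃₀ s as a finite union of elements of 𝒰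
      set t' : Finset (Set X) := s.image (fun x => a ∩ x) with ht'def
      have ht'𝒰 : ↑t' ⊆ 𝒰 := by
        intro x hx
        simp only [ht'def, Finset.coe_image, Set.mem_image, Finset.mem_coe] at hx
        obtain ⟨b, hb, rfl⟩ := hx
        exact hdown a (a ∩ b) ha𝒰 ((hopen a ha𝒰).inter (hopen b (hs𝒰 hb)))
          Set.inter_subset_left
      have ht'card : t'.card ≤ n := (Finset.card_image_le).trans hscard
      have ht'eq : ⋃₀ (↑t' : Set (Set X)) = a ∩ ⋃₀ (↑s : Set (Set X)) := by
        ext x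
        simp only [ht'def, Finset.coe_image, Set.sUnion_image, Set.mem_iUnion,
          Set.mem_inter_iff, Set.mem_sUnion, Finset.mem_coe]
        tauto
      obtain ⟨h'e, h'μ, h'ν⟩ := ih t' ht'card ht'𝒰
      rw [ht'eq] at h'e h'μ h'ν
      have key : μ (a ∪ ⋃₀ ↑s) + μ (a ∩ ⋃₀ ↑s) = ν (a ∪ ⋃₀ ↑s) + ν (a ∩ ⋃₀ ↑s) := by
        rw [measure_union_add_inter a hAopen.measurableSet,
          measure_union_add_inter a hAopen.measurableSet, hagree a ha𝒰, ihe]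
      rw [htins]
      have hcoe : (↑(insert a s) : Set (Set X)) = insert a ↑s := by simp
      rw [hcoe, Set.sUnion_insert]
      have hμfin : μ (a ∪ ⋃₀ ↑s) < ⊤ :=
        lt_of_le_of_lt (measure_union_le a (⋃₀ ↑s))
          (ENNReal.add_lt_top.2 ⟨(hfin a ha𝒰).1, ihμ⟩)
      have hνfin : ν (a ∪ ⋃₀ ↑s) < ⊤ :=
        lt_of_le_of_lt (measure_union_le a (⋃₀ ↑s))
          (ENNReal.add_lt_top.2 ⟨(hfin a ha𝒰).2, ihν⟩)
      refine ⟨?_, hμfin, hνfin⟩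
      rw [h'e] at key
      exact WithTop.add_right_cancel h'ν.ne key
  have hV : ∀ t : Finset (Set X), ↑t ⊆ 𝒰 →
      μ (⋃₀ ↑t) = ν (⋃₀ ↑t) ∧ μ (⋃₀ ↑t) < ⊤ ∧ ν (⋃₀ ↑t) < ⊤ :=
    fun t => hVn t.card t le_rfl
  -- μ and ν agree on open subsets of finite unions of elements of 𝒰
  have hB : ∀ (t : Finset (Set X)), ↑t ⊆ 𝒰 → ∀ V : Set X, IsOpen V →
      V ⊆ ⋃₀ ↑t → μ V = ν V := by
    intro t ht V hVopen hVsub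
    set t' : Finset (Set X) := t.image (fun s => V ∩ s) with ht'def
    have ht'𝒰 : ↑t' ⊆ 𝒰 := by
      intro s hs
      simp only [ht'def, Finset.coe_image, Set.mem_image, Finset.mem_coe] at hs
      obtain ⟨b, hb, rfl⟩ := hs
      exact hdown b (V ∩ b) (ht hb) (hVopen.inter (hopen b (ht hb)))
        Set.inter_subset_right
    have ht'eq : ⋃₀ (↑t' : Set (Set X)) = V := by
      ext x
      simp only [ht'def, Finset.coe_image, Set.sUnion_image, Set.mem_iUnion,
        Finset.mem_coe]
      constructor
      · rintro ⟨b, _, hx, _⟩; exact hx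
      · intro hx
        obtain ⟨b, hb, hxb⟩ := hVsub hx
        exact ⟨b, hb, hx, hxb⟩
    have := (hV t' ht'𝒰).1
    rwa [ht'eq] at this
  -- restricted measures agree on finite unions of elements of 𝒰
  have hR : ∀ (t : Finset (Set X)), ↑t ⊆ 𝒰 →
      μ.restrict (⋃₀ ↑t) = ν.restrict (⋃₀ ↑t) := by
    intro t ht
    have hWopen : IsOpen (⋃₀ (↑t : Set (Set X))) :=
      isOpen_sUnion fun s hs => hopen s (ht hs)
    obtain ⟨hWe, hWμ, hWν⟩ := hV t ht
    haveI : IsFiniteMeasure (μ.restrict (⋃₀ ↑t)) :=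
      ⟨by rwa [Measure.restrict_apply_univ]⟩
    refine ext_of_generate_finite {s : Set X | IsOpen s} ?_ isPiSystem_isOpen ?_ ?_
    · rw [BorelSpace.measurable_eq (α := X)]; rfl
    · intro s hs
      rw [Measure.restrict_apply hs.measurableSet,
        Measure.restrict_apply hs.measurableSet]
      exact hB t ht _ (hs.inter hWopen) Set.inter_subset_right
    · rw [Measure.restrict_apply_univ, Measure.restrict_apply_univ]
      exact hWe
  -- build an increasing countable cover of X by finite unions of elements of 𝒰
  obtain ⟨S, hS𝒰, hSuniv⟩ := hbase Set.univ isOpen_univ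
  have hcov : ∀ n : ℕ, ∃ t : Finset (Set X), ↑t ⊆ 𝒰 ∧
      compactCovering X n ⊆ ⋃₀ ↑t := by
    intro n
    have hsub : compactCovering X n ⊆ ⋃ i ∈ S, i := by
      rw [← Set.sUnion_eq_biUnion, ← hSuniv]; exact Set.subset_univ _
    obtain ⟨b', hb'S, hb'fin, hb'cov⟩ :=
      (isCompact_compactCovering X n).elim_finite_subcover_image
        (fun i hi => hopen i (hS𝒰 hi)) hsub
    refine ⟨hb'fin.toFinset, ?_, ?_⟩
    · intro s hs
      rw [Set.Finite.coe_toFinset] at hs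
      exact hS𝒰 (hb'S hs)
    · rw [Set.Finite.coe_toFinset, Set.sUnion_eq_biUnion]
      exact hb'cov
  choose t ht𝒰 htcov using hcov
  set T : ℕ → Finset (Set X) := fun n => (Finset.range (n + 1)).biUnion t with hT
  have hT𝒰 : ∀ n, ↑(T n) ⊆ 𝒰 := by
    intro n s hs
    simp only [hT, Finset.coe_biUnion, Set.mem_iUnion, Finset.mem_coe] at hs
    obtain ⟨m, _, hm⟩ := hs
    exact ht𝒰 m hm
  set W : ℕ → Set X := fun n => ⋃₀ ↑(T n) with hW
  have hWmono : Monotone W := by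
    intro m n hmn
    apply Set.sUnion_subset_sUnion
    apply Finset.coe_subset.2
    exact Finset.biUnion_subset_biUnion_of_subset_left _
      (Finset.range_subset_range.2 (by omega))
  have hWuniv : ⋃ n, W n = Set.univ := by
    apply Set.eq_univ_of_univ_subset
    rw [← iUnion_compactCovering X]
    apply Set.iUnion_subset
    intro n
    refine Set.subset_iUnion_of_subset n ((htcov n).trans ?_)
    apply Set.sUnion_subset_sUnion
    apply Finset.coe_subset.2
    intro s hs
    simp only [hT, Finset.mem_biUnion, Finset.mem_range]
    exact ⟨n, by omega, hs⟩
  -- conclude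
  ext B hB'
  have hmono : Monotone fun n => B ∩ W n := fun m n h => Set.inter_subset_inter_right _ (hWmono h)
  have hBu : ⋃ n, B ∩ W n = B := by
    rw [← Set.inter_iUnion, hWuniv, Set.inter_univ]
  calc μ B = μ (⋃ n, B ∩ W n) := by rw [hBu]
    _ = ⨆ n, μ (B ∩ W n) := (hmono.directed_le).measure_iUnion
    _ = ⨆ n, ν (B ∩ W n) := by
        congr 1; funext n
        rw [← Measure.restrict_apply hB', ← Measure.restrict_apply hB', hR (T n) (hT𝒰 n)]
    _ = ν (⋃ n, B ∩ W n) := ((hmono.directed_le).measure_iUnion).symm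
    _ = ν B := by rw [hBu]
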